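/- Let X be a finite nonempty set, P a row-stochastic matrix on X, and μ a probability vector on X such that the lazy matrix 𝒫 = (P + I)/2 has mixing parameters (C,ρ) with respect to μ. Let y : X → ℝ satisfy Σ_x μ(x) y(x) = 0. Then the series Σ_{k=0}^∞ 𝒫^k y converges in ℝ^X, and its sum x := (1/2) Σ_{k=0}^∞ 𝒫^k y satisfies (I − P) x = y and ‖x‖∞ ≤ C ‖y‖∞ / (1 − ρ), where ‖v‖∞ := max_x |v(x)|. -/

import Mathlib

section

variable {X : Type*} [Fintype X] [DecidableEq X] [Nonempty X]

/-- Sup norm of a vector. -/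
noncomputable def vecSupNorm (v : X → ℝ) : ℝ :=
  Finset.univ.sup' Finset.univ_nonempty fun x => |v x|

/-- The lazy matrix `𝒫 = (P + I)/2`. -/
noncomputable def lazy (P : Matrix X X ℝ) : Matrix X X ℝ :=
  (2⁻¹ : ℝ) • (P + 1)

/-- Mixing parameters `(C, ρ)` for a matrix `M` with respect to `μ`:
`max_x (1/2) Σ_{x'} |M^k(x,x') − μ(x')| ≤ C ρ^k` for all `k ≥ 0`. -/
def HasMixing (M : Matrix X X ℝ) (μ : X → ℝ) (C ρ : ℝ) : Prop :=
  ∀ k : ℕ, ∀ x : X, (2⁻¹ : ℝ) * ∑ x', |(M ^ k) x x' - μ x'| ≤ C * ρ ^ k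

lemma le_vecSupNorm (v : X → ℝ) (x : X) : |v x| ≤ vecSupNorm v := by
  unfold vecSupNorm
  exact Finset.le_sup' (fun z => |v z|) (Finset.mem_univ x)

lemma vecSupNorm_nonneg (v : X → ℝ) : 0 ≤ vecSupNorm v :=
  le_trans (abs_nonneg _) (le_vecSupNorm v (Classical.arbitrary X))

set_option maxHeartbeats 1600000 in
/-- If `μ^⊤ y = 0`, the series `Σ_k 𝒫^k y` converges, and
`x = (1/2) Σ_k 𝒫^k y` solves the Poisson equation `(I − P)x = y` with
`‖x‖∞ ≤ C‖y‖∞/(1 − ρ)`. -/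
theorem stmt_6
    (P : Matrix X X ℝ)
    (hP0 : ∀ x x', 0 ≤ P x x')
    (hP1 : ∀ x, ∑ x', P x x' = 1)
    (μ : X → ℝ) (hμ0 : ∀ x, 0 ≤ μ x) (hμ1 : ∑ x, μ x = 1)
    (C ρ : ℝ) (hC : 0 < C) (hρ0 : 0 < ρ) (hρ1 : ρ < 1)
    (hmix : HasMixing (lazy P) μ C ρ)
    (y : X → ℝ) (hy : ∑ x, μ x * y x = 0) :
    Summable (fun k : ℕ => (lazy P ^ k).mulVec y) ∧
    (1 - P).mulVec ((2⁻¹ : ℝ) • ∑' k : ℕ, (lazy P ^ k).mulVec y) = y ∧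
    vecSupNorm ((2⁻¹ : ℝ) • ∑' k : ℕ, (lazy P ^ k).mulVec y) ≤
      C * vecSupNorm y / (1 - ρ) := by
  set M := lazy P with hM
  -- pointwise bound
  have key : ∀ (k : ℕ) (x : X), |(M ^ k).mulVec y x| ≤ 2 * C * vecSupNorm y * ρ ^ k := by
    intro k x
    have h1 : (M ^ k).mulVec y x = ∑ x', ((M ^ k) x x' - μ x') * y x' := by
      simp only [Matrix.mulVec, dotProduct]
      rw [← sub_zero (∑ x', (M ^ k) x x' * y x'), ← hy, ← Finset.sum_sub_distrib]
      congr 1; ext x'; ring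
    rw [h1]
    calc |∑ x', ((M ^ k) x x' - μ x') * y x'|
        ≤ ∑ x', |((M ^ k) x x' - μ x') * y x'| := Finset.abs_sum_le_sum_abs _ _
      _ ≤ ∑ x', |(M ^ k) x x' - μ x'| * vecSupNorm y := by
          apply Finset.sum_le_sum
          intro x' _
          rw [abs_mul]
          exact mul_le_mul_of_nonneg_left (le_vecSupNorm y x') (abs_nonneg _)
      _ = (∑ x', |(M ^ k) x x' - μ x'|) * vecSupNorm y := by rw [Finset.sum_mul]
      _ ≤ (2 * (C * ρ ^ k)) * vecSupNorm y := by
          apply mul_le_mul_of_nonneg_right _ (vecSupNorm_nonneg y)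
          have := hmix k x
          linarith
      _ = 2 * C * vecSupNorm y * ρ ^ k := by ring
  -- componentwise summability
  have hsum : Summable (fun k : ℕ => (M ^ k).mulVec y) := by
    rw [Pi.summable]
    intro x
    apply Summable.of_norm_bounded (g := fun k => 2 * C * vecSupNorm y * ρ ^ k)
    · exact (summable_geometric_of_lt_one hρ0.le hρ1).mul_left _
    · intro k
      simpa using key k x
  refine ⟨hsum, ?_, ?_⟩
  · -- Poisson equation
    set S := ∑' k : ℕ, (M ^ k).mulVec y with hS
    have hcomm : M.mulVec S = ∑' k : ℕ, M.mulVec ((M ^ k).mulVec y) := by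
      let L : (X → ℝ) →L[ℝ] (X → ℝ) := LinearMap.toContinuousLinearMap (Matrix.mulVecLin M)
      have : M.mulVec S = L S := rfl
      rw [this, ContinuousLinearMap.map_tsum L hsum]
      rfl
    have hshift : (fun k : ℕ => M.mulVec ((M ^ k).mulVec y)) =
        fun k : ℕ => (M ^ (k + 1)).mulVec y := by
      funext k
      rw [pow_succ', ← Matrix.mulVec_mulVec]
    have hzero : S = y + ∑' k : ℕ, (M ^ (k + 1)).mulVec y := by
      rw [hS, Summable.tsum_eq_zero_add hsum, pow_zero, Matrix.one_mulVec]
    have hMS : M.mulVec S = S - y := by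
      rw [hcomm, hshift]
      rw [hzero]; abel
    have hfact : (1 - P) = (2 : ℝ) • (1 - M) := by
      rw [hM]
      unfold lazy
      ext i j
      by_cases h : i = j <;>
        simp [Matrix.smul_apply, Matrix.sub_apply, Matrix.add_apply, Matrix.one_apply, h] <;>
        ring
    rw [hfact, Matrix.smul_mulVec, Matrix.mulVec_smul, Matrix.sub_mulVec,
      Matrix.one_mulVec, hMS]
    ext x
    simp only [Pi.smul_apply, Pi.sub_apply, smul_eq_mul]
    ring
  · -- bound
    have htsum_apply : ∀ x : X, (∑' k : ℕ, (M ^ k).mulVec y) x =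
        ∑' k : ℕ, (M ^ k).mulVec y x := by
      intro x
      exact tsum_apply hsum
    have hbound : ∀ x : X, |((2⁻¹ : ℝ) • ∑' k : ℕ, (M ^ k).mulVec y) x| ≤
        C * vecSupNorm y / (1 - ρ) := by
      intro x
      have hsx : Summable (fun k : ℕ => (M ^ k).mulVec y x) := by
        apply Summable.of_norm_bounded (g := fun k => 2 * C * vecSupNorm y * ρ ^ k)
        · exact (summable_geometric_of_lt_one hρ0.le hρ1).mul_left _
        · intro k; simpa using key k x
      have h1 : |∑' k : ℕ, (M ^ k).mulVec y x| ≤ 2 * C * vecSupNorm y / (1 - ρ) := by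
        calc |∑' k : ℕ, (M ^ k).mulVec y x| ≤ ∑' k : ℕ, |(M ^ k).mulVec y x| := by
              simpa [Real.norm_eq_abs] using
                norm_tsum_le_tsum_norm (f := fun k : ℕ => (M ^ k).mulVec y x)
                  (by simpa [Real.norm_eq_abs] using hsx.abs)
          _ ≤ ∑' k : ℕ, 2 * C * vecSupNorm y * ρ ^ k := by
              apply Summable.tsum_le_tsum (fun k => key k x) hsx.abs
              exact (summable_geometric_of_lt_one hρ0.le hρ1).mul_left _
          _ = 2 * C * vecSupNorm y * (1 - ρ)⁻¹ := by
              rw [tsum_mul_left, tsum_geometric_of_lt_one hρ0.le hρ1]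
          _ = 2 * C * vecSupNorm y / (1 - ρ) := by rw [div_eq_mul_inv]
      simp only [Pi.smul_apply, smul_eq_mul, abs_mul, htsum_apply x]
      rw [abs_of_nonneg (by norm_num : (0:ℝ) ≤ (2⁻¹ : ℝ))]
      calc (2⁻¹ : ℝ) * |∑' k : ℕ, (M ^ k).mulVec y x|
          ≤ 2⁻¹ * (2 * C * vecSupNorm y / (1 - ρ)) := by
            apply mul_le_mul_of_nonneg_left h1 (by norm_num)
        _ = C * vecSupNorm y / (1 - ρ) := by ring
    exact Finset.sup'_le _ _ fun x _ => hbound x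

end
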